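/- Let T be a commutative ring that is a faithfully flat R-algebra, M an R-module, and N a submodule of M such that the image N ⊗_R T is a strongly irreducible submodule of M ⊗_R T. Then N is a strongly irreducible submodule of M. -/

import Mathlib

open TensorProduct

section Aux

variable {R : Type*} [CommRing R] (T : Type*) [CommRing T] [Algebra R T]
  {M : Type*} [AddCommGroup M] [Module R M]

lemma aux_baseChange_eq_range (p : Submodule R M) :
    p.baseChange T = LinearMap.range (p.subtype.baseChange T) := by
  apply le_antisymm
  · exact le_rfl
  · rintro - ⟨x, rfl⟩
    induction x using TensorProduct.induction_on with
    | zero => simp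
    | tmul a m => simpa using Submodule.tmul_mem_baseChange_of_mem a m.2
    | add x y hx hy => rw [map_add]; exact Submodule.add_mem _ hx hy

lemma aux_range_baseChange_le {P : Type*} [AddCommGroup P] [Module R P]
    {N : Submodule R M} (g : P →ₗ[R] M) (hg : LinearMap.range g ≤ N) :
    LinearMap.range (g.baseChange T) ≤ N.baseChange T := by
  rintro - ⟨x, rfl⟩
  induction x using TensorProduct.induction_on with
  | zero => simp
  | tmul a p =>
    simpa using Submodule.tmul_mem_baseChange_of_mem a (hg ⟨p, rfl⟩)
  | add x y hx hy => rw [map_add]; exact Submodule.add_mem _ hx hy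

lemma aux_ker_baseChange [Module.Flat R T] {P : Type*} [AddCommGroup P] [Module R P]
    (f : M →ₗ[R] P) :
    LinearMap.ker (f.baseChange T) = (LinearMap.ker f).baseChange T := by
  have hex : Function.Exact ((LinearMap.ker f).subtype.baseChange T) (f.baseChange T) :=
    Module.Flat.lTensor_exact T (LinearMap.exact_subtype_ker_map f)
  rw [LinearMap.exact_iff] at hex
  rw [hex, ← aux_baseChange_eq_range]

lemma aux_descend [Module.FaithfullyFlat R T] {K N : Submodule R M}
    (h : K.baseChange T ≤ N.baseChange T) : K ≤ N := by
  have hK : LinearMap.range (K.subtype.baseChange T) ≤ LinearMap.ker (N.mkQ.baseChange T) := by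
    rw [aux_ker_baseChange, Submodule.ker_mkQ, ← aux_baseChange_eq_range]
    exact h
  have h0 : (N.mkQ ∘ₗ K.subtype).lTensor T = 0 := by
    apply LinearMap.ext
    intro z
    have heq : (N.mkQ ∘ₗ K.subtype).lTensor T z
        = (N.mkQ.baseChange T) (K.subtype.baseChange T z) := by
      rw [LinearMap.lTensor_comp]; rfl
    rw [heq]
    simpa using LinearMap.mem_ker.mp (hK ⟨z, rfl⟩)
  have hzero : (N.mkQ ∘ₗ K.subtype) = 0 :=
    (Module.FaithfullyFlat.zero_iff_lTensor_zero (R := R) (M := T) _).mpr h0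
  intro x hx
  have := LinearMap.congr_fun hzero ⟨x, hx⟩
  simpa [Submodule.Quotient.mk_eq_zero] using this

end Aux

theorem strongly_irreducible_of_faithfully_flat_baseChange
    {R : Type*} [CommRing R] (T : Type*) [CommRing T] [Algebra R T]
    [Module.FaithfullyFlat R T]
    {M : Type*} [AddCommGroup M] [Module R M] (N : Submodule R M)
    (hbc : ∀ K L : Submodule T (TensorProduct R T M),
      K ⊓ L ≤ N.baseChange T → K ≤ N.baseChange T ∨ L ≤ N.baseChange T) :
    ∀ K L : Submodule R M, K ⊓ L ≤ N → K ≤ N ∨ L ≤ N := by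
  intro K L h
  have hKL : K.baseChange T ⊓ L.baseChange T ≤ N.baseChange T := by
    rintro x ⟨hxK, hxL⟩
    rw [aux_baseChange_eq_range] at hxK
    obtain ⟨y, rfl⟩ := hxK
    set P := LinearMap.ker (L.mkQ ∘ₗ K.subtype) with hP
    have hy : y ∈ P.baseChange T := by
      rw [← aux_ker_baseChange, LinearMap.mem_ker]
      have heq : (L.mkQ ∘ₗ K.subtype).baseChange T y
          = (L.mkQ.baseChange T) (K.subtype.baseChange T y) := by
        rw [LinearMap.baseChange_comp]; rfl
      rw [heq]
      have : K.subtype.baseChange T y ∈ LinearMap.ker (L.mkQ.baseChange T) := by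
        rw [aux_ker_baseChange, Submodule.ker_mkQ]
        exact hxL
      exact LinearMap.mem_ker.mp this
    rw [aux_baseChange_eq_range] at hy
    obtain ⟨z, rfl⟩ := hy
    have hrange : LinearMap.range (K.subtype ∘ₗ P.subtype) ≤ N := by
      rintro - ⟨p, rfl⟩
      refine h ⟨(p : K).2, ?_⟩
      have h2 : L.mkQ (K.subtype (p : K)) = 0 := p.2
      simpa [Submodule.Quotient.mk_eq_zero] using h2
    have heq : K.subtype.baseChange T (P.subtype.baseChange T z)
        = (K.subtype ∘ₗ P.subtype).baseChange T z := by
      rw [LinearMap.baseChange_comp]; rfl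
    rw [heq]
    exact aux_range_baseChange_le T _ hrange ⟨z, rfl⟩
  rcases hbc _ _ hKL with h1 | h1
  · exact Or.inl (aux_descend T h1)
  · exact Or.inr (aux_descend T h1)
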